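/- Let 𝔡 be a finite-dimensional Lie algebra with invariant β ∈ S²𝔡, and 𝔤 ⊆ 𝔡 a β-coisotropic Lie subalgebra. In the metrized Lie algebra 𝔡̂ = 𝔡 ⋉ 𝔡*_β with bilinear form β̂((ξ₁,μ₁),(ξ₂,μ₂)) = β(μ₁,μ₂) + ⟨μ₁,ξ₂⟩ + ⟨μ₂,ξ₁⟩, the subalgebra 𝔠 = 𝔤 ⋉ 𝔡*_β is coisotropic (𝔠^⊥ ⊆ 𝔠), 𝔠^⊥ is an ideal in 𝔠, and the quotient 𝔮 = 𝔠/𝔠^⊥ is a Lie algebra carrying a non-degenerate invariant symmetric bilinear form induced from β̂, in which the image of 𝔤 is a Lagrangian Lie subalgebra. -/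

import Mathlib

open Module LieAlgebra

/-- `x` lies in the β̂-orthogonal `𝔠^⊥` of the coisotropic subalgebra
`𝔠 = 𝔤 ⋉ 𝔡*_β = {y | y.1 ∈ G}` of `𝔡 ⋉ 𝔡*_β`. -/
def InCperp {K D : Type*} [Field K] [AddCommGroup D] [Module K D]
    (G : Submodule K D)
    (hatβ : (D × Module.Dual K D) → (D × Module.Dual K D) → K)
    (x : D × Module.Dual K D) : Prop :=
  ∀ y : D × Module.Dual K D, y.1 ∈ G → hatβ x y = 0

/-- Coisotropic reduction of `𝔡 ⋉ 𝔡*_β` by `𝔠 = 𝔤 ⋉ 𝔡*_β`, for a β-coisotropic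
Lie subalgebra `𝔤 ⊆ 𝔡`: the subalgebra `𝔠` is coisotropic (`𝔠^⊥ ⊆ 𝔠`), `𝔠^⊥` is
an ideal in `𝔠`, and the quotient `𝔮 = 𝔠/𝔠^⊥` is a Lie algebra with a
non-degenerate invariant symmetric bilinear form induced from `β̂`, in which the
image of `𝔤` is a Lagrangian Lie subalgebra.  All assertions about the quotient
are expressed at the level of representatives in `𝔠`. -/
theorem coisotropic_reduction {K D : Type*} [Field K]
    [LieRing D] [LieAlgebra K D] [FiniteDimensional K D]
    (Bs : Module.Dual K D →ₗ[K] D)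
    (hsymm : ∀ μ ν : Module.Dual K D, μ (Bs ν) = ν (Bs μ))
    (hinv : ∀ (ξ : D) (μ : Module.Dual K D),
      Bs (μ ∘ₗ LieAlgebra.ad K D ξ) = -⁅ξ, Bs μ⁆)
    (br : Module.Dual K D → Module.Dual K D → Module.Dual K D)
    (hbr : ∀ (μ₁ μ₂ : Module.Dual K D) (ξ : D), br μ₁ μ₂ ξ = μ₂ ⁅ξ, Bs μ₁⁆)
    (Br : (D × Module.Dual K D) → (D × Module.Dual K D) → (D × Module.Dual K D))
    (hBr : ∀ x y : D × Module.Dual K D,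
      Br x y = (⁅x.1, y.1⁆,
        -(y.2 ∘ₗ LieAlgebra.ad K D x.1) + (x.2 ∘ₗ LieAlgebra.ad K D y.1)
          + br x.2 y.2))
    (hatβ : (D × Module.Dual K D) → (D × Module.Dual K D) → K)
    (hβ : ∀ x y : D × Module.Dual K D,
      hatβ x y = x.2 (Bs y.2) + x.2 y.1 + y.2 x.1)
    (G : Submodule K D)
    (hG : ∀ x ∈ G, ∀ y ∈ G, ⁅x, y⁆ ∈ G)
    (hco : ∀ μ ν : Module.Dual K D,
      μ ∈ G.dualAnnihilator → ν ∈ G.dualAnnihilator → μ (Bs ν) = 0) :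
    -- 𝔠 is coisotropic: 𝔠^⊥ ⊆ 𝔠
    (∀ x : D × Module.Dual K D, InCperp G hatβ x → x.1 ∈ G) ∧
    -- 𝔠 is a Lie subalgebra
    (∀ x y : D × Module.Dual K D, x.1 ∈ G → y.1 ∈ G → (Br x y).1 ∈ G) ∧
    -- 𝔠^⊥ is an ideal in 𝔠
    (∀ x y : D × Module.Dual K D, x.1 ∈ G → InCperp G hatβ y →
      InCperp G hatβ (Br x y) ∧ InCperp G hatβ (Br y x)) ∧
    -- the bracket descends to the quotient 𝔮 = 𝔠/𝔠^⊥
    (∀ x x' y : D × Module.Dual K D, x.1 ∈ G → x'.1 ∈ G → y.1 ∈ G →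
      InCperp G hatβ (x - x') →
      InCperp G hatβ (Br x y - Br x' y) ∧ InCperp G hatβ (Br y x - Br y x')) ∧
    -- the bilinear form descends to the quotient
    (∀ x y y' : D × Module.Dual K D, x.1 ∈ G → y.1 ∈ G → y'.1 ∈ G →
      InCperp G hatβ (y - y') → hatβ x y = hatβ x y') ∧
    -- the induced form is symmetric and invariant on 𝔠
    (∀ x y : D × Module.Dual K D, x.1 ∈ G → y.1 ∈ G → hatβ x y = hatβ y x) ∧
    (∀ x y z : D × Module.Dual K D, x.1 ∈ G → y.1 ∈ G → z.1 ∈ G →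
      hatβ (Br x y) z + hatβ y (Br x z) = 0) ∧
    -- the image of 𝔤 in the quotient is Lagrangian
    (∀ x : D × Module.Dual K D, x.1 ∈ G →
      ((∀ ξ ∈ G, hatβ x (ξ, (0 : Module.Dual K D)) = 0) ↔
        ∃ ξ ∈ G, InCperp G hatβ (x - (ξ, (0 : Module.Dual K D))))) := by
  -- key identity: μ ⁅η, Bs ν⁆ = -ν ⁅η, Bs μ⁆
  classical
  have adap : ∀ (a b : D), LieAlgebra.ad K D a b = ⁅a, b⁆ := fun a b => rfl
  have key : ∀ (μ ν : Module.Dual K D) (η : D), μ ⁅η, Bs ν⁆ = -ν ⁅η, Bs μ⁆ := by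
    intro μ ν η
    have h1 : μ (Bs (ν ∘ₗ LieAlgebra.ad K D η)) = (ν ∘ₗ LieAlgebra.ad K D η) (Bs μ) :=
      hsymm μ (ν ∘ₗ LieAlgebra.ad K D η)
    rw [hinv η ν] at h1
    simp only [map_neg, LinearMap.comp_apply, adap] at h1
    linear_combination -h1
  -- br as a composition
  have br_eq : ∀ μ ν : Module.Dual K D, br μ ν = -(ν ∘ₗ LieAlgebra.ad K D (Bs μ)) := by
    intro μ ν; ext w
    simp only [hbr, LinearMap.neg_apply, LinearMap.comp_apply, adap]
    rw [← lie_skew (Bs μ) w, map_neg, neg_neg]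
  have Bs_br : ∀ μ ν : Module.Dual K D, Bs (br μ ν) = ⁅Bs μ, Bs ν⁆ := by
    intro μ ν; rw [br_eq, map_neg, hinv]; simp
  have br_skew : ∀ μ ν : Module.Dual K D, br μ ν = -br ν μ := by
    intro μ ν; ext w
    simp only [hbr, LinearMap.neg_apply, key ν μ w]
  -- Bs μ ∈ G whenever μ annihilates G
  have BsG : ∀ μ : Module.Dual K D, (∀ η ∈ G, μ η = 0) → Bs μ ∈ G := by
    intro μ hμ
    rw [← Subspace.forall_mem_dualAnnihilator_apply_eq_zero_iff G (Bs μ)]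
    intro φ hφ
    exact hco φ μ hφ ((Submodule.mem_dualAnnihilator μ).2 hμ)
  -- characterization of membership in 𝔠^⊥
  have mem_iff : ∀ x : D × Module.Dual K D,
      InCperp G hatβ x ↔ (∀ η ∈ G, x.2 η = 0) ∧ x.1 = -Bs x.2 := by
    intro x
    constructor
    · intro h
      have h1 : ∀ η ∈ G, x.2 η = 0 := by
        intro η hη
        have := h (η, 0) hη
        rw [hβ] at this
        simpa using this
      refine ⟨h1, ?_⟩
      have h2 : ∀ ν : Module.Dual K D, ν (Bs x.2 + x.1) = 0 := by
        intro ν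
        have := h (0, ν) (Submodule.zero_mem G)
        rw [hβ] at this
        simp only [map_add] at this ⊢
        simpa [hsymm x.2 ν] using this
      have h3 := (Module.forall_dual_apply_eq_zero_iff K (Bs x.2 + x.1)).1 h2
      exact eq_neg_of_add_eq_zero_left (by rw [add_comm]; exact h3)
    · rintro ⟨h1, h2⟩ y hy
      rw [hβ, h2, hsymm x.2 y.2, h1 y.1 hy]
      simp
  -- linearity of hatβ in each slot
  have hatβ_symm : ∀ x y : D × Module.Dual K D, hatβ x y = hatβ y x := by
    intro x y; rw [hβ, hβ, hsymm x.2 y.2]; ring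
  have hatβ_sub_left : ∀ x x' y : D × Module.Dual K D,
      hatβ (x - x') y = hatβ x y - hatβ x' y := by
    intro x x' y
    simp only [hβ, Prod.fst_sub, Prod.snd_sub, LinearMap.sub_apply, map_sub]
    ring
  -- InCperp is closed under negation
  have inCperp_neg : ∀ x : D × Module.Dual K D, InCperp G hatβ x → InCperp G hatβ (-x) := by
    intro x hx y hy
    have : hatβ (-x) y = hatβ (0 - x) y := by rw [zero_sub]
    rw [this, hatβ_sub_left, hx y hy]
    rw [hβ]; simp
  -- Br skew-symmetry and linearity
  have Br_skew : ∀ x y : D × Module.Dual K D, Br y x = -Br x y := by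
    intro x y
    rw [hBr, hBr, Prod.neg_mk, br_skew y.2 x.2]
    refine Prod.ext ?_ ?_
    · show ⁅y.1, x.1⁆ = -⁅x.1, y.1⁆
      rw [lie_skew]
    · show -(x.2 ∘ₗ LieAlgebra.ad K D y.1) + y.2 ∘ₗ LieAlgebra.ad K D x.1 + -br x.2 y.2
        = -(-(y.2 ∘ₗ LieAlgebra.ad K D x.1) + x.2 ∘ₗ LieAlgebra.ad K D y.1 + br x.2 y.2)
      abel
  have Br_sub_left : ∀ x x' y : D × Module.Dual K D,
      Br (x - x') y = Br x y - Br x' y := by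
    intro x x' y
    simp only [hBr, Prod.fst_sub, Prod.snd_sub, Prod.mk_sub_mk, sub_lie]
    refine Prod.ext rfl ?_
    simp only [Prod.snd]
    ext w
    simp only [hbr, LinearMap.add_apply, LinearMap.sub_apply, LinearMap.neg_apply,
      LinearMap.comp_apply, adap, sub_lie, lie_sub, map_sub]
    ring
  -- the four main claims about 𝔠^⊥
  have coiso : ∀ x : D × Module.Dual K D, InCperp G hatβ x → x.1 ∈ G := by
    intro x hx
    obtain ⟨h1, h2⟩ := (mem_iff x).1 hx
    rw [h2]
    exact G.neg_mem (BsG x.2 h1)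
  have ideal : ∀ x y : D × Module.Dual K D, x.1 ∈ G → InCperp G hatβ y →
      InCperp G hatβ (Br x y) := by
    intro x y hx hy
    obtain ⟨h1, h2⟩ := (mem_iff y).1 hy
    rw [mem_iff, hBr]
    constructor
    · intro η hη
      simp only [LinearMap.add_apply, LinearMap.neg_apply, LinearMap.comp_apply, adap, hbr]
      have e1 : y.2 ⁅x.1, η⁆ = 0 := h1 _ (hG x.1 hx η hη)
      have e2 : y.2 ⁅η, Bs x.2⁆ = -x.2 ⁅η, Bs y.2⁆ := key y.2 x.2 η
      have e3 : x.2 ⁅y.1, η⁆ = x.2 ⁅η, Bs y.2⁆ := by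
        rw [h2, neg_lie, ← lie_skew (Bs y.2) η, neg_neg]
      rw [e1, e2, e3]; ring
    · simp only [map_add, map_neg, LinearMap.comp_neg, hinv, neg_neg, Bs_br, h2, lie_neg, neg_lie]
      rw [← lie_skew (Bs x.2) (Bs y.2)]
      abel
  refine ⟨coiso, ?_, ?_, ?_, ?_, ?_, ?_, ?_⟩
  · -- subalgebra
    intro x y hx hy
    rw [hBr]
    exact hG x.1 hx y.1 hy
  · -- ideal, both sides
    intro x y hx hy
    refine ⟨ideal x y hx hy, ?_⟩
    rw [Br_skew]
    exact inCperp_neg _ (ideal x y hx hy)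
  · -- bracket descends
    intro x x' y hx hx' hy hxx'
    constructor
    · rw [← Br_sub_left, Br_skew y (x - x')]
      exact inCperp_neg _ (ideal y (x - x') hy hxx')
    · have h2 : Br y (x - x') = -Br (x - x') y := by
        rw [Br_skew y (x - x'), neg_neg]
      have h : Br y x - Br y x' = Br y (x - x') := by
        rw [Br_skew x y, Br_skew x' y, h2, Br_sub_left]
        abel
      rw [h]
      exact ideal y (x - x') hy hxx'
  · -- form descends
    intro x y y' hx hy hy' hyy'
    have := hyy' x hx
    rw [hatβ_sub_left] at this
    rw [hatβ_symm x y, hatβ_symm x y']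
    linear_combination this
  · -- symmetric
    intro x y _ _; exact hatβ_symm x y
  · -- invariant
    intro x y z _ _ _
    rw [hβ, hβ, hBr, hBr]
    simp only [Prod.fst, Prod.snd, LinearMap.add_apply, LinearMap.neg_apply,
      LinearMap.comp_apply, adap, hbr, map_add, map_neg, hinv, Bs_br]
    have e1 : x.2 ⁅y.1, Bs z.2⁆ = -z.2 ⁅y.1, Bs x.2⁆ := key x.2 z.2 y.1
    have e2 : y.2 ⁅Bs z.2, Bs x.2⁆ = -y.2 ⁅Bs x.2, Bs z.2⁆ := by
      rw [← lie_skew (Bs z.2) (Bs x.2), map_neg]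
    have e3 : x.2 ⁅y.1, z.1⁆ = -x.2 ⁅z.1, y.1⁆ := by
      rw [← lie_skew y.1 z.1, map_neg]
    rw [e1, e2, e3]
    ring
  · -- Lagrangian
    intro x hx
    constructor
    · intro h
      have hx2 : ∀ η ∈ G, x.2 η = 0 := by
        intro η hη
        have := h η hη
        rw [hβ] at this
        simpa using this
      refine ⟨x.1 + Bs x.2, G.add_mem hx (BsG x.2 hx2), ?_⟩
      rw [mem_iff]
      constructor
      · intro η hη
        simpa using hx2 η hη
      · simp only [Prod.fst_sub, Prod.snd_sub, Prod.fst, Prod.snd, map_sub]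
        simp
    · rintro ⟨ξ, hξ, hperp⟩ η hη
      obtain ⟨h1, h2⟩ := (mem_iff _).1 hperp
      have := h1 η hη
      simp only [Prod.snd_sub, Prod.snd, LinearMap.sub_apply] at this
      rw [hβ]
      simp only [Prod.fst, Prod.snd, map_zero]
      simpa using this
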